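/- The N×N Hilbert matrix H with entries H[m,n] = 1/(m+n+1), m,n ∈ {0,…,N−1}, satisfies ‖H‖ ≤ π in operator norm. -/

import Mathlib

open Matrix Real Set intervalIntegral

noncomputable def hilbF (a x : ℝ) : ℝ := ((a + x) * Real.sqrt x)⁻¹

noncomputable def hilbG (a x : ℝ) : ℝ := 2 / Real.sqrt a * Real.arctan (Real.sqrt x / Real.sqrt a)

lemma hasDerivAt_hilbG {a x : ℝ} (ha : 0 < a) (hx : 0 < x) :
    HasDerivAt (hilbG a) (hilbF a x) x := by
  have hsa : (0:ℝ) < Real.sqrt a := Real.sqrt_pos.2 ha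
  have hsx : (0:ℝ) < Real.sqrt x := Real.sqrt_pos.2 hx
  have h1 : HasDerivAt (fun y => Real.sqrt y / Real.sqrt a) (1 / (2 * Real.sqrt x) / Real.sqrt a) x :=
    (Real.hasDerivAt_sqrt hx.ne').div_const _
  have h2 := (Real.hasDerivAt_arctan (Real.sqrt x / Real.sqrt a)).comp x h1
  have h3 := h2.const_mul (2 / Real.sqrt a)
  refine h3.congr_deriv ?_
  symm
  have hax : a = Real.sqrt a ^ 2 := (Real.sq_sqrt ha.le).symm
  have hxx : x = Real.sqrt x ^ 2 := (Real.sq_sqrt hx.le).symm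
  rw [hilbF]
  rw [show (a + x) = Real.sqrt a ^ 2 + Real.sqrt x ^ 2 by rw [← hax, ← hxx]]
  field_simp

lemma arctan_lb {x : ℝ} (hx : 0 ≤ x) : x / (1 + x ^ 2) ≤ Real.arctan x := by
  have key : Monotone (fun t : ℝ => Real.arctan t - t / (1 + t ^ 2)) := by
    have hd : ∀ t : ℝ, HasDerivAt (fun t : ℝ => Real.arctan t - t / (1 + t ^ 2))
        (1 / (1 + t ^ 2) - (1 * (1 + t ^ 2) - t * (2 * t ^ 1)) / (1 + t ^ 2) ^ 2) t := by
      intro t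
      have h0 : (1 : ℝ) + t ^ 2 ≠ 0 := by positivity
      exact (Real.hasDerivAt_arctan t).sub
        ((hasDerivAt_id t).div ((hasDerivAt_pow 2 t).const_add 1) h0)
    refine monotone_of_deriv_nonneg (fun t => (hd t).differentiableAt) (fun t => ?_)
    rw [(hd t).deriv]
    have h0 : (0:ℝ) < 1 + t ^ 2 := by positivity
    rw [div_sub_div _ _ (by positivity) (by positivity)]
    apply div_nonneg _ (by positivity)
    nlinarith
  have := key hx
  simpa using this

lemma hilbG_zero (a : ℝ) : hilbG a 0 = 0 := by simp [hilbG]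

lemma first_interval {a : ℝ} (ha : 1/2 ≤ a) : hilbF a (1/2) ≤ hilbG a 1 - hilbG a 0 := by
  have ha0 : (0:ℝ) < a := lt_of_lt_of_le (by norm_num) ha
  have hsa : (0:ℝ) < Real.sqrt a := Real.sqrt_pos.2 ha0
  have hsaa : Real.sqrt a * Real.sqrt a = a := Real.mul_self_sqrt ha0.le
  have hsh : (0:ℝ) < Real.sqrt (1/2 : ℝ) := Real.sqrt_pos.2 (by norm_num)
  have hshh : Real.sqrt (1/2:ℝ) * Real.sqrt (1/2:ℝ) = 1/2 := Real.mul_self_sqrt (by norm_num)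
  rw [hilbG_zero, sub_zero, hilbF, hilbG, Real.sqrt_one]
  -- goal : ((a + 1/2) * √(1/2))⁻¹ ≤ 2 / √a * arctan (1 / √a)
  rcases le_or_gt a 1 with hle | hgt
  · -- a ≤ 1 : arctan (1/√a) ≥ π/4
    have h1 : (1:ℝ) ≤ 1 / Real.sqrt a := by
      rw [le_div_iff₀ hsa, one_mul]
      nlinarith
    have h2 : Real.pi / 4 ≤ Real.arctan (1 / Real.sqrt a) := by
      rw [← Real.arctan_one]; exact Real.arctan_strictMono.monotone h1
    have h3 : 2 / Real.sqrt a * (Real.pi / 4) ≤ 2 / Real.sqrt a * Real.arctan (1 / Real.sqrt a) :=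
      mul_le_mul_of_nonneg_left h2 (by positivity)
    refine le_trans ?_ h3
    rw [inv_le_iff_one_le_mul₀ (by positivity)]
    have hpi : (3:ℝ) ≤ Real.pi := Real.pi_gt_three.le
    have hsa1 : Real.sqrt a ≤ 1 := by nlinarith
    have h12 : (0.7:ℝ) ≤ Real.sqrt (1/2:ℝ) := by nlinarith
    rw [div_mul_eq_mul_div, div_mul_eq_mul_div, le_div_iff₀ hsa]
    have e1 : (0.7:ℝ) ≤ (a + 1/2) * Real.sqrt (1/2:ℝ) := by nlinarith
    have e2 : (1.05:ℝ) ≤ 2 * (Real.pi/4) * ((a + 1/2) * Real.sqrt (1/2:ℝ)) := by nlinarith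
    linarith
  · -- 1 < a : arctan x ≥ x/(1+x²)
    have hx0 : (0:ℝ) ≤ 1 / Real.sqrt a := by positivity
    have h2 := arctan_lb hx0
    have hxsq : (1 / Real.sqrt a) ^ 2 = 1 / a := by
      rw [div_pow, one_pow, sq, hsaa]
    have h3 : 2 / Real.sqrt a * ((1 / Real.sqrt a) / (1 + 1/a)) ≤
        2 / Real.sqrt a * Real.arctan (1 / Real.sqrt a) := by
      apply mul_le_mul_of_nonneg_left _ (by positivity)
      rw [← hxsq]; exact h2
    refine le_trans ?_ h3
    -- ((a+1/2)√(1/2))⁻¹ ≤ (2/√a)·(1/√a)/(1+1/a) = 2/(a+1)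
    have hrw : 2 / Real.sqrt a * ((1 / Real.sqrt a) / (1 + 1/a)) = 2 / (a + 1) := by
      field_simp
      exact (Real.sq_sqrt ha0.le).symm
    rw [hrw, inv_le_iff_one_le_mul₀ (by positivity), div_mul_eq_mul_div, le_div_iff₀ (by positivity)]
    have h12 : (0.7:ℝ) ≤ Real.sqrt (1/2:ℝ) := by nlinarith
    nlinarith

lemma convexOn_hilbF {a : ℝ} (ha : 0 < a) : ConvexOn ℝ (Ioi 0) (hilbF a) := by
  have hint : interior (Ioi (0:ℝ)) = Ioi 0 := interior_Ioi
  -- convexity of x ↦ (a+x)⁻¹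
  have hg1 : ConvexOn ℝ (Ioi 0) (fun x : ℝ => (a + x)⁻¹) := by
    apply convexOn_of_hasDerivWithinAt2_nonneg (convex_Ioi 0)
      (f' := fun x => -((a + x) ^ 2)⁻¹) (f'' := fun x => 2 * (a + x) / ((a + x) ^ 2) ^ 2)
    · exact ContinuousOn.inv₀ (by fun_prop) (fun x hx => by have := hx.out; positivity)
    · intro x hx
      rw [hint] at hx
      have hax : a + x ≠ 0 := by have := hx.out; positivity
      have := ((hasDerivAt_id x).const_add a).inv hax
      simp only [id_eq] at this
      exact (this.congr_deriv (by ring)).hasDerivWithinAt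
    · intro x hx
      rw [hint] at hx
      have hax : a + x ≠ 0 := by have := hx.out; positivity
      have h1 : HasDerivAt (fun y : ℝ => (a + y) ^ 2) (2 * (a + x)) x := by
        have := ((hasDerivAt_id x).const_add a).pow 2
        simp only [id_eq] at this
        exact this.congr_deriv (by ring)
      have := (h1.inv (by positivity)).neg
      exact (this.congr_deriv (by ring)).hasDerivWithinAt
    · intro x hx
      rw [hint] at hx
      have := hx.out
      positivity
  have hg2 : ConvexOn ℝ (Ioi 0) (fun x : ℝ => (Real.sqrt x)⁻¹) := by
    apply convexOn_of_hasDerivWithinAt2_nonneg (convex_Ioi 0)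
      (f' := fun x => -(2 * x * Real.sqrt x)⁻¹)
      (f'' := fun x => (2 * Real.sqrt x + 2 * x * (1 / (2 * Real.sqrt x))) / (2 * x * Real.sqrt x) ^ 2)
    · exact ContinuousOn.inv₀ Real.continuous_sqrt.continuousOn
        (fun x hx => (Real.sqrt_pos.2 hx.out).ne')
    · intro x hx
      rw [hint] at hx
      have hx0 : (0:ℝ) < x := hx.out
      have hsx : (0:ℝ) < Real.sqrt x := Real.sqrt_pos.2 hx0
      have h1 := (Real.hasDerivAt_sqrt hx0.ne').inv hsx.ne'
      refine (h1.congr_deriv ?_).hasDerivWithinAt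
      rw [Real.sq_sqrt hx0.le]
      field_simp
    · intro x hx
      rw [hint] at hx
      have hx0 : (0:ℝ) < x := hx.out
      have hsx : (0:ℝ) < Real.sqrt x := Real.sqrt_pos.2 hx0
      have hu : HasDerivAt (fun y : ℝ => 2 * y * Real.sqrt y)
          (2 * Real.sqrt x + 2 * x * (1 / (2 * Real.sqrt x))) x := by
        have := ((hasDerivAt_id x).const_mul 2).mul (Real.hasDerivAt_sqrt hx0.ne')
        simp only [id_eq] at this
        exact this.congr_deriv (by ring)
      have hne : 2 * x * Real.sqrt x ≠ 0 := by positivity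
      have := (hu.inv hne).neg
      exact (this.congr_deriv (by ring)).hasDerivWithinAt
    · intro x hx
      rw [hint] at hx
      have hx0 : (0:ℝ) < x := hx.out
      have hsx : (0:ℝ) < Real.sqrt x := Real.sqrt_pos.2 hx0
      positivity
  have hmul := hg1.mul hg2
    (fun x hx => by have := hx.out; positivity)
    (fun x hx => by positivity)
    (by
      apply AntitoneOn.monovaryOn
      · intro x hx y hy hxy
        have : (0:ℝ) < a + x := by have := hx.out; positivity
        exact inv_anti₀ this (by linarith)
      · intro x hx y hy hxy
        have hsx : (0:ℝ) < Real.sqrt x := Real.sqrt_pos.2 hx.out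
        exact inv_anti₀ hsx (Real.sqrt_le_sqrt hxy))
  exact hmul.congr (fun x hx => by simp [hilbF, Pi.mul_apply, mul_inv, mul_comm])

lemma continuousOn_hilbF {a : ℝ} (ha : 0 < a) : ContinuousOn (hilbF a) (Ioi 0) := by
  apply ContinuousOn.inv₀
  · exact (continuousOn_const.add continuousOn_id).mul Real.continuous_sqrt.continuousOn
  · intro x hx
    have hx0 : (0:ℝ) < x := hx.out
    have : (0:ℝ) < Real.sqrt x := Real.sqrt_pos.2 hx0
    positivity

lemma midpoint_interval {a : ℝ} (ha : 0 < a) {k : ℝ} (hk : 0 < k) :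
    hilbF a (k + 1/2) ≤ hilbG a (k + 1) - hilbG a k := by
  have hsub : uIcc k (k+1) ⊆ Ioi (0:ℝ) := by
    rw [uIcc_of_le (by linarith)]
    intro x hx
    exact lt_of_lt_of_le hk hx.1
  have hcont : ContinuousOn (hilbF a) (uIcc k (k+1)) := (continuousOn_hilbF ha).mono hsub
  have hint : IntervalIntegrable (hilbF a) MeasureTheory.volume k (k+1) :=
    hcont.intervalIntegrable
  have hint1 : IntervalIntegrable (hilbF a) MeasureTheory.volume k (k+1/2) := by
    apply hint.mono_set
    rw [uIcc_of_le (by linarith), uIcc_of_le (by linarith)]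
    exact Icc_subset_Icc le_rfl (by linarith)
  have hint2 : IntervalIntegrable (hilbF a) MeasureTheory.volume (k+1/2) (k+1) := by
    apply hint.mono_set
    rw [uIcc_of_le (by linarith), uIcc_of_le (by linarith)]
    exact Icc_subset_Icc (by linarith) le_rfl
  have hintr : IntervalIntegrable (fun y => hilbF a (2*(k+1/2) - y))
      MeasureTheory.volume (k+1/2) (k+1) := by
    apply ContinuousOn.intervalIntegrable
    apply (continuousOn_hilbF ha).comp (by fun_prop)
    intro y hy
    rw [uIcc_of_le (by linarith)] at hy
    simp only [mem_Ioi]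
    nlinarith [hy.2]
  have hftc : ∫ x in k..(k+1), hilbF a x = hilbG a (k+1) - hilbG a k := by
    apply integral_eq_sub_of_hasDerivAt
    · intro x hx
      exact hasDerivAt_hilbG ha (hsub hx)
    · exact hint
  rw [← hftc]
  have hrefl : ∫ x in k..(k+1/2), hilbF a x
      = ∫ y in (k+1/2)..(k+1), hilbF a (2*(k+1/2) - y) := by
    rw [integral_comp_sub_left (fun x => hilbF a x) (2*(k+1/2))]
    congr 1 <;> ring
  have hsplit : ∫ x in k..(k+1), hilbF a x
      = ∫ y in (k+1/2)..(k+1), (hilbF a (2*(k+1/2) - y) + hilbF a y) := by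
    rw [← integral_add_adjacent_intervals hint1 hint2, hrefl, ← integral_add hintr hint2]
  rw [hsplit]
  have hconst : ∫ _ in (k+1/2)..(k+1), (2 * hilbF a (k+1/2)) = hilbF a (k+1/2) := by
    rw [integral_const]
    have h2 : k + 1 - (k+1/2) = 1/2 := by ring
    rw [h2]; simp
  rw [show hilbF a (k + 1/2) = ∫ _ in (k+1/2)..(k+1), (2 * hilbF a (k+1/2)) from hconst.symm]
  apply integral_mono_on (by linarith)
  · exact intervalIntegrable_const
  · exact hintr.add hint2
  · intro y hy
    have h1 : (2*(k+1/2) - y) ∈ Ioi (0:ℝ) := by simp only [mem_Ioi]; nlinarith [hy.2]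
    have h2 : y ∈ Ioi (0:ℝ) := by simp only [mem_Ioi]; nlinarith [hy.1]
    have hcv := (convexOn_hilbF ha).2 h1 h2 (le_of_lt one_half_pos) (le_of_lt one_half_pos)
      (by norm_num)
    have heq : (1/2 : ℝ) • (2*(k+1/2) - y) + (1/2 : ℝ) • y = k + 1/2 := by
      simp only [smul_eq_mul]; ring
    rw [heq] at hcv
    simp only [smul_eq_mul] at hcv
    linarith

lemma sum_hilbF_le {a : ℝ} (ha : 1/2 ≤ a) (N : ℕ) :
    ∑ n ∈ Finset.range N, hilbF a ((n : ℝ) + 1/2) ≤ Real.pi / Real.sqrt a := by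
  have ha0 : (0:ℝ) < a := lt_of_lt_of_le (by norm_num) ha
  have hsa : (0:ℝ) < Real.sqrt a := Real.sqrt_pos.2 ha0
  have htel : ∑ n ∈ Finset.range N, (hilbG a ((n:ℝ)+1) - hilbG a (n:ℝ))
      = hilbG a (N:ℝ) - hilbG a 0 := by
    have := Finset.sum_range_sub (fun n : ℕ => hilbG a (n : ℝ)) N
    simpa [Nat.cast_succ] using this
  have hstep : ∀ n ∈ Finset.range N, hilbF a ((n:ℝ) + 1/2)
      ≤ hilbG a ((n:ℝ)+1) - hilbG a (n:ℝ) := by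
    intro n _
    rcases Nat.eq_zero_or_pos n with rfl | hn
    · simpa using first_interval ha
    · exact midpoint_interval ha0 (by exact_mod_cast hn)
  calc ∑ n ∈ Finset.range N, hilbF a ((n : ℝ) + 1/2)
      ≤ ∑ n ∈ Finset.range N, (hilbG a ((n:ℝ)+1) - hilbG a (n:ℝ)) :=
        Finset.sum_le_sum hstep
    _ = hilbG a (N:ℝ) - hilbG a 0 := htel
    _ = hilbG a (N:ℝ) := by rw [hilbG_zero, sub_zero]
    _ ≤ Real.pi / Real.sqrt a := by
        rw [hilbG]
        have := (Real.arctan_lt_pi_div_two (Real.sqrt (N:ℝ) / Real.sqrt a)).le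
        calc 2 / Real.sqrt a * Real.arctan (Real.sqrt (N:ℝ) / Real.sqrt a)
            ≤ 2 / Real.sqrt a * (Real.pi / 2) := mul_le_mul_of_nonneg_left this (by positivity)
          _ = Real.pi / Real.sqrt a := by field_simp

lemma row_sum_le (N : ℕ) (m : ℕ) :
    ∑ n ∈ Finset.range N, (((m:ℝ) + (n:ℝ) + 1) * Real.sqrt ((n:ℝ) + 1/2))⁻¹
      ≤ Real.pi / Real.sqrt ((m:ℝ) + 1/2) := by
  have key := sum_hilbF_le (a := (m:ℝ) + 1/2) (by
    have : (0:ℝ) ≤ (m:ℝ) := Nat.cast_nonneg m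
    linarith) N
  refine le_trans (le_of_eq ?_) key
  apply Finset.sum_congr rfl
  intro n _
  rw [hilbF]
  congr 2
  ring

noncomputable def opNorm {𝕜 : Type*} [RCLike 𝕜] {m n : ℕ} (M : Matrix (Fin m) (Fin n) 𝕜) : ℝ :=
  ‖LinearMap.toContinuousLinearMap (Matrix.toEuclideanLin M)‖

theorem stmt18 {N : ℕ} (H : Matrix (Fin N) (Fin N) ℝ)
    (hH : H = Matrix.of fun m n : Fin N => 1 / ((m : ℝ) + (n : ℝ) + 1)) :
    opNorm H ≤ Real.pi := by
  subst hH
  set H : Matrix (Fin N) (Fin N) ℝ := Matrix.of fun m n : Fin N => 1 / ((m : ℝ) + (n : ℝ) + 1)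
    with hH
  apply ContinuousLinearMap.opNorm_le_bound _ Real.pi_nonneg
  intro x
  set w : Fin N → ℝ := fun n => Real.sqrt ((n : ℝ) + 1/2) with hw
  have hwpos : ∀ n : Fin N, 0 < w n := fun n => Real.sqrt_pos.2 (by positivity)
  have hHpos : ∀ m n : Fin N, 0 < H m n := by
    intro m n
    simp only [hH, Matrix.of_apply, one_div]
    have h1 : (0:ℝ) ≤ (m:ℝ) := by positivity
    have h2 : (0:ℝ) ≤ (n:ℝ) := by positivity
    positivity
  -- rows bounds
  have hrow : ∀ m : Fin N, ∑ n : Fin N, H m n * (w n)⁻¹ ≤ Real.pi / w m := by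
    intro m
    have := row_sum_le N (m : ℕ)
    rw [← Fin.sum_univ_eq_sum_range
      (fun n : ℕ => (((m:ℝ) + (n:ℝ) + 1) * Real.sqrt ((n:ℝ) + 1/2))⁻¹) N] at this
    refine le_trans (le_of_eq ?_) this
    refine Finset.sum_congr rfl fun n _ => ?_
    rw [hH]
    simp only [Matrix.of_apply, one_div, hw, mul_inv]
  have hcol : ∀ n : Fin N, ∑ m : Fin N, H m n * (w m)⁻¹ ≤ Real.pi / w n := by
    intro n
    have := row_sum_le N (n : ℕ)
    rw [← Fin.sum_univ_eq_sum_range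
      (fun m : ℕ => (((n:ℝ) + (m:ℝ) + 1) * Real.sqrt ((m:ℝ) + 1/2))⁻¹) N] at this
    refine le_trans (le_of_eq ?_) this
    refine Finset.sum_congr rfl fun m _ => ?_
    rw [hH]
    simp only [Matrix.of_apply, one_div, hw, mul_inv]
    ring_nf
  -- apply coordinates
  have happly : ∀ m : Fin N, (Matrix.toEuclideanLin H x) m = ∑ n : Fin N, H m n * x n := by
    intro m
    rfl
  -- Cauchy-Schwarz per row
  have hCS : ∀ m : Fin N, (∑ n : Fin N, H m n * x n) ^ 2
      ≤ (Real.pi / w m) * ∑ n : Fin N, H m n * w n * (x n)^2 := by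
    intro m
    have cs := Finset.sum_mul_sq_le_sq_mul_sq Finset.univ
      (fun n : Fin N => Real.sqrt (H m n) * (Real.sqrt (w n))⁻¹)
      (fun n : Fin N => Real.sqrt (H m n) * Real.sqrt (w n) * x n)
    have e1 : ∑ n : Fin N, (Real.sqrt (H m n) * (Real.sqrt (w n))⁻¹)
        * (Real.sqrt (H m n) * Real.sqrt (w n) * x n) = ∑ n : Fin N, H m n * x n := by
      refine Finset.sum_congr rfl fun n _ => ?_
      have h1 : Real.sqrt (H m n) * Real.sqrt (H m n) = H m n :=
        Real.mul_self_sqrt (hHpos m n).le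
      have h2 : (Real.sqrt (w n))⁻¹ * Real.sqrt (w n) = 1 :=
        inv_mul_cancel₀ (Real.sqrt_pos.2 (hwpos n)).ne'
      calc (Real.sqrt (H m n) * (Real.sqrt (w n))⁻¹) * (Real.sqrt (H m n) * Real.sqrt (w n) * x n)
          = (Real.sqrt (H m n) * Real.sqrt (H m n)) * ((Real.sqrt (w n))⁻¹ * Real.sqrt (w n)) * x n := by ring
        _ = H m n * x n := by rw [h1, h2, mul_one]
    have e2 : ∑ n : Fin N, (Real.sqrt (H m n) * (Real.sqrt (w n))⁻¹) ^ 2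
        = ∑ n : Fin N, H m n * (w n)⁻¹ := by
      refine Finset.sum_congr rfl fun n _ => ?_
      rw [mul_pow, ← Real.sqrt_inv, Real.sq_sqrt (hHpos m n).le,
        Real.sq_sqrt (inv_nonneg.2 (hwpos n).le)]
    have e3 : ∑ n : Fin N, (Real.sqrt (H m n) * Real.sqrt (w n) * x n) ^ 2
        = ∑ n : Fin N, H m n * w n * (x n)^2 := by
      refine Finset.sum_congr rfl fun n _ => ?_
      rw [mul_pow, mul_pow, Real.sq_sqrt (hHpos m n).le, Real.sq_sqrt (hwpos n).le]
    rw [e1, e2, e3] at cs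
    refine le_trans cs (mul_le_mul_of_nonneg_right (hrow m) ?_)
    refine Finset.sum_nonneg fun n _ => ?_
    have := (hHpos m n).le
    have := (hwpos n).le
    positivity
  -- sum over rows
  have main : ∑ m : Fin N, (∑ n : Fin N, H m n * x n) ^ 2
      ≤ Real.pi ^ 2 * ∑ n : Fin N, (x n) ^ 2 := by
    calc ∑ m : Fin N, (∑ n : Fin N, H m n * x n) ^ 2
        ≤ ∑ m : Fin N, (Real.pi / w m) * ∑ n : Fin N, H m n * w n * (x n)^2 :=
          Finset.sum_le_sum fun m _ => hCS m
      _ = ∑ m : Fin N, ∑ n : Fin N, (Real.pi / w m) * (H m n * w n * (x n)^2) := by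
          simp [Finset.mul_sum]
      _ = ∑ n : Fin N, ∑ m : Fin N, (Real.pi / w m) * (H m n * w n * (x n)^2) :=
          Finset.sum_comm
      _ = ∑ n : Fin N, Real.pi * (w n * (x n)^2) * ∑ m : Fin N, H m n * (w m)⁻¹ := by
          refine Finset.sum_congr rfl fun n _ => ?_
          rw [Finset.mul_sum]
          refine Finset.sum_congr rfl fun m _ => ?_
          rw [div_eq_mul_inv]
          ring
      _ ≤ ∑ n : Fin N, Real.pi * (w n * (x n)^2) * (Real.pi / w n) := by
          refine Finset.sum_le_sum fun n _ => ?_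
          refine mul_le_mul_of_nonneg_left (hcol n) ?_
          have := (hwpos n).le
          positivity
      _ = ∑ n : Fin N, Real.pi ^ 2 * (x n) ^ 2 := by
          refine Finset.sum_congr rfl fun n _ => ?_
          field_simp [(hwpos n).ne']
      _ = Real.pi ^ 2 * ∑ n : Fin N, (x n) ^ 2 := by rw [Finset.mul_sum]
  -- norms
  rw [LinearMap.coe_toContinuousLinearMap']
  rw [EuclideanSpace.norm_eq, EuclideanSpace.norm_eq]
  have hpix : Real.pi * Real.sqrt (∑ n : Fin N, ‖x n‖ ^ 2)
      = Real.sqrt (Real.pi ^ 2 * ∑ n : Fin N, ‖x n‖ ^ 2) := by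
    rw [Real.sqrt_mul (sq_nonneg _), Real.sqrt_sq Real.pi_nonneg]
  rw [hpix]
  apply Real.sqrt_le_sqrt
  have exn : ∀ n : Fin N, ‖x n‖ ^ 2 = (x n) ^ 2 := fun n => by
    rw [Real.norm_eq_abs, sq_abs]
  calc ∑ m : Fin N, ‖(Matrix.toEuclideanLin H x) m‖ ^ 2
      = ∑ m : Fin N, (∑ n : Fin N, H m n * x n) ^ 2 := by
        refine Finset.sum_congr rfl fun m _ => ?_
        rw [happly m, Real.norm_eq_abs, sq_abs]
    _ ≤ Real.pi ^ 2 * ∑ n : Fin N, (x n) ^ 2 := main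
    _ = Real.pi ^ 2 * ∑ n : Fin N, ‖x n‖ ^ 2 := by
        simp_rw [exn]
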